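/- Fix an integer k ≥ 3. For all sufficiently large n and every integer m with 0 ≤ m ≤ n/2^{13}, one has |F_m| ≥ 2^m · |F_0|, where F_0 is the set of acyclic C_k-free oriented graphs on [n]. -/

import Mathlib

open scoped Classical

/-- An arc set on `Fin n`: a digraph on vertex set `[n]` is identified with its
finite set of arcs. -/
abbrev ArcSet (n : ℕ) := Finset (Fin n × Fin n)

/-- A digraph is loopless. -/
def IsLoopless {n : ℕ} (E : ArcSet n) : Prop := ∀ v : Fin n, (v, v) ∉ E

/-- An oriented graph: loopless and at most one of the arcs `(u,v)`, `(v,u)`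
is present for each pair. -/
def IsOriented {n : ℕ} (E : ArcSet n) : Prop :=
  IsLoopless E ∧ ∀ u v : Fin n, (u, v) ∈ E → (v, u) ∉ E

/-- `E` contains a (not necessarily induced) copy of the directed cycle `C_k`. -/
def ContainsCycle {n : ℕ} (k : ℕ) (E : ArcSet n) : Prop :=
  ∃ f : ZMod k → Fin n, Function.Injective f ∧ ∀ i : ZMod k, (f i, f (i + 1)) ∈ E

/-- `E` is `C_k`-free. -/
def CkFree {n : ℕ} (k : ℕ) (E : ArcSet n) : Prop := ¬ ContainsCycle k E

/-- The number of backwards arcs of `E` with respect to the ordering `σ`: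
arcs `(u,v)` with `σ u > σ v`. -/
def backCount {n : ℕ} (E : ArcSet n) (σ : Equiv.Perm (Fin n)) : ℕ :=
  (E.filter fun e => σ e.2 < σ e.1).card

/-- `b(E)`: the minimum number of backwards arcs over all orderings, i.e. the
number of backwards arcs in a transitive-optimal ordering. -/
noncomputable def bMin {n : ℕ} (E : ArcSet n) : ℕ :=
  Finset.univ.inf' Finset.univ_nonempty (backCount E)

/-- `E` is acyclic: it contains no directed cycle of any positive length. -/
def IsAcyclic {n : ℕ} (E : ArcSet n) : Prop :=
  ∀ l : ℕ, 0 < l → ¬ ContainsCycle l E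

/-- `F_m(n,k)`: the set of `C_k`-free oriented graphs on `[n]` with `b(G) = m`. -/
noncomputable def Fm (n k m : ℕ) : Finset (ArcSet n) :=
  Finset.univ.filter fun E => IsOriented E ∧ CkFree k E ∧ bMin E = m

/-- `F_0(n,k)`: the set of acyclic `C_k`-free oriented graphs on `[n]`. -/
noncomputable def F0 (n k : ℕ) : Finset (ArcSet n) :=
  Finset.univ.filter fun E => IsOriented E ∧ CkFree k E ∧ IsAcyclic E

namespace FmPf

variable {n : ℕ}

/-- From a closed walk we can extract a genuine directed cycle. -/
lemma exists_cycle_of_walk {E : ArcSet n} {q0 : ℕ} {g0 : ℕ → Fin n}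
    (hq0 : 0 < q0) (hend : g0 q0 = g0 0) (harc : ∀ a < q0, (g0 a, g0 (a + 1)) ∈ E) :
    ∃ p, 0 < p ∧ ContainsCycle p E := by
  classical
  set P : ℕ → Prop := fun q => 0 < q ∧ ∃ g : ℕ → Fin n, g q = g 0 ∧ ∀ a < q, (g a, g (a + 1)) ∈ E
    with hP
  have hP0 : P q0 := ⟨hq0, g0, hend, harc⟩
  have hex : ∃ q, P q := ⟨q0, hP0⟩
  set q := Nat.find hex with hqdef
  obtain ⟨hq, g, hgq, hga⟩ := Nat.find_spec hex
  have hmin : ∀ q' < q, ¬ P q' := fun q' hq' => Nat.find_min hex hq'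
  -- distinctness on [0, q)
  have hdist : ∀ i j, i < j → j < q → g i ≠ g j := by
    intro i j hij hjq heq
    apply hmin (j - i) (by omega)
    refine ⟨by omega, fun a => g (i + a), ?_, ?_⟩
    · show g (i + (j - i)) = g (i + 0)
      have h1 : i + (j - i) = j := by omega
      rw [h1, Nat.add_zero, heq]
    · intro a ha
      have h2 : i + a < q := by omega
      have := hga _ h2
      show (g (i + a), g (i + (a + 1))) ∈ E
      have h3 : i + (a + 1) = i + a + 1 := by omega
      rw [h3]
      exact this
  have hdist0 : ∀ i, 0 < i → i < q → g i ≠ g 0 := by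
    intro i h0 hiq heq
    apply hmin i hiq
    exact ⟨h0, g, by rw [heq], fun a ha => hga a (by omega)⟩
  haveI : NeZero q := ⟨hq.ne'⟩
  refine ⟨q, hq, fun z => g z.val, ?_, ?_⟩
  · intro z w hzw
    have hzw' : g z.val = g w.val := hzw
    by_contra hne
    have hz := ZMod.val_lt z
    have hw := ZMod.val_lt w
    have hvne : z.val ≠ w.val := fun h => hne (ZMod.val_injective q h)
    rcases Nat.lt_or_ge z.val w.val with h | h
    · exact hdist _ _ h hw hzw'
    · exact hdist _ _ (lt_of_le_of_ne h (Ne.symm hvne)) hz hzw'.symm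
  · intro z
    have hz := ZMod.val_lt z
    have hval : (z + 1).val = (z.val + 1) % q := by
      rcases Nat.lt_or_ge 1 q with h1 | h1
      · rw [ZMod.val_add, ZMod.val_one_eq_one_mod]
        conv_rhs => rw [Nat.add_mod, Nat.mod_eq_of_lt hz]
      · have h2 := ZMod.val_lt (z + 1)
        have h3 : (z.val + 1) % q = 0 := by
          have hzq : z.val + 1 = q := by omega
          rw [hzq, Nat.mod_self]
        omega
    show (g z.val, g (z + 1).val) ∈ E
    rcases Nat.lt_or_ge (z.val + 1) q with h | h
    · rw [hval, Nat.mod_eq_of_lt h]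
      exact hga _ hz
    · have hq1 : z.val + 1 = q := by omega
      rw [hval, hq1, Nat.mod_self]
      have := hga z.val hz
      rw [hq1, hgq] at this
      exact this

/-- A `TransGen` chain yields a walk. -/
lemma transGen_walk {E : ArcSet n} {u v : Fin n}
    (h : Relation.TransGen (fun a b => (a, b) ∈ E) u v) :
    ∃ q, ∃ g : ℕ → Fin n, 0 < q ∧ g 0 = u ∧ g q = v ∧ ∀ a < q, (g a, g (a + 1)) ∈ E := by
  induction h with
  | @single b h =>
    refine ⟨1, fun a => if a = 0 then u else b, Nat.one_pos, by simp, by simp, ?_⟩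
    intro a ha
    have ha0 : a = 0 := by omega
    subst ha0
    simpa using h
  | @tail b c hsteps hstep ih =>
    obtain ⟨q, g, hq, hg0, hgq, hga⟩ := ih
    refine ⟨q + 1, fun a => if a ≤ q then g a else c, by omega, by simp [hq.le, hg0], by simp, ?_⟩
    intro a ha
    rcases Nat.lt_or_ge a q with h' | h'
    · show ((if a ≤ q then g a else c), (if a + 1 ≤ q then g (a + 1) else c)) ∈ E
      rw [if_pos (by omega : a ≤ q), if_pos (by omega : a + 1 ≤ q)]
      exact hga a h'
    · have haq : a = q := by omega
      subst haq
      show ((if a ≤ a then g a else c), (if a + 1 ≤ a then g (a + 1) else c)) ∈ E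
      rw [if_pos le_rfl, if_neg (by omega), hgq]
      exact hstep

lemma no_transGen_loop {E : ArcSet n} (hA : IsAcyclic E) (v : Fin n) :
    ¬ Relation.TransGen (fun a b => (a, b) ∈ E) v v := by
  intro h
  obtain ⟨q, g, hq, hg0, hgq, hga⟩ := transGen_walk h
  obtain ⟨p, hp, hc⟩ := exists_cycle_of_walk hq (by rw [hgq, hg0]) hga
  exact hA p hp hc

/-- Topological sort: an acyclic digraph admits an ordering with no backwards arcs. -/
lemma exists_topo_order {E : ArcSet n} (hA : IsAcyclic E) :
    ∃ σ : Equiv.Perm (Fin n), backCount E σ = 0 := by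
  classical
  set r : Fin n → Fin n → Prop := fun a b => (a, b) ∈ E with hr
  set rle : Fin n → Fin n → Prop := fun a b => a = b ∨ Relation.TransGen r a b with hrle
  haveI : IsPartialOrder (Fin n) rle := by
    refine { refl := fun a => Or.inl rfl, trans := ?_, antisymm := ?_ }
    · rintro a b c (rfl | hab) (rfl | hbc)
      · exact Or.inl rfl
      · exact Or.inr hbc
      · exact Or.inr hab
      · exact Or.inr (hab.trans hbc)
    · intro a b hab hba
      rcases hab with rfl | hab
      · rfl
      rcases hba with heq | hba
      · exact heq.symm
      · exact (no_transGen_loop hA a (hab.trans hba)).elim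
  obtain ⟨sle, hlin, hext⟩ := extend_partialOrder rle
  haveI := hlin
  set t : Fin n → Fin n → Prop := fun a b => sle a b ∧ a ≠ b with ht
  have htrans : ∀ {a b c}, t a b → t b c → t a c := by
    rintro a b c ⟨hab, hne1⟩ ⟨hbc, hne2⟩
    refine ⟨_root_.trans hab hbc, ?_⟩
    rintro rfl
    exact hne1 (antisymm hab hbc)
  have hirr : ∀ v, ¬ t v v := fun v h => h.2 rfl
  have htri : ∀ a b, a ≠ b → t a b ∨ t b a := by
    intro a b hne
    rcases total_of sle a b with h | h
    · exact Or.inl ⟨h, hne⟩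
    · exact Or.inr ⟨h, Ne.symm hne⟩
  let rk : Fin n → ℕ := fun v => (Finset.univ.filter (fun u => t u v)).card
  have hrk_lt : ∀ v, rk v < n := by
    intro v
    have h1 : (Finset.univ.filter (fun u => t u v)) ⊂ Finset.univ := by
      rw [Finset.ssubset_iff_of_subset (Finset.subset_univ _)]
      refine ⟨v, Finset.mem_univ v, ?_⟩
      simp only [Finset.mem_filter, Finset.mem_univ, true_and]
      exact hirr v
    have := Finset.card_lt_card h1
    simpa using this
  have hmono : ∀ {a b}, t a b → rk a < rk b := by
    intro a b hab
    apply Finset.card_lt_card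
    rw [Finset.ssubset_iff_of_subset]
    · refine ⟨a, ?_, ?_⟩
      · simp only [Finset.mem_filter, Finset.mem_univ, true_and]
        exact hab
      · simp only [Finset.mem_filter, Finset.mem_univ, true_and]
        exact hirr a
    · intro u hu
      simp only [Finset.mem_filter, Finset.mem_univ, true_and] at hu ⊢
      exact htrans hu hab
  let f : Fin n → Fin n := fun v => ⟨rk v, hrk_lt v⟩
  have hinj : Function.Injective f := by
    intro a b hfe
    by_contra hne
    have hv : rk a = rk b := by
      have := congrArg Fin.val hfe
      simpa using this
    rcases htri a b hne with h | h
    · exact absurd hv (Nat.ne_of_lt (hmono h))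
    · exact absurd hv.symm (Nat.ne_of_lt (hmono h))
  let σ : Equiv.Perm (Fin n) :=
    Equiv.ofBijective f ((Fintype.bijective_iff_injective_and_card f).mpr ⟨hinj, rfl⟩)
  refine ⟨σ, ?_⟩
  rw [backCount, Finset.card_eq_zero, Finset.filter_eq_empty_iff]
  intro x hx
  have hx' : (x.1, x.2) ∈ E := by simpa using hx
  have hne : x.1 ≠ x.2 := by
    intro h
    have hloop : (x.2, x.2) ∈ E := by rw [h] at hx'; exact hx'
    exact no_transGen_loop hA x.2 (Relation.TransGen.single hloop)
  have htx : t x.1 x.2 := ⟨hext x.1 x.2 (Or.inr (Relation.TransGen.single hx')), hne⟩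
  have hlt : σ x.1 < σ x.2 := by
    show f x.1 < f x.2
    exact hmono htx
  exact fun hcon => lt_asymm hlt hcon

section Construction

variable {n l m : ℕ}

/-- Packed arithmetic hypotheses. -/
structure Ctx (n l m : ℕ) : Prop where
  hl3 : 3 ≤ l
  hl4 : l ≤ 4
  hln : 2048 * l * m ≤ n

lemma Ctx.hl0 (C : Ctx n l m) : 0 < l := by have := C.hl3; omega

def tIdx {m : ℕ} (s : Fin m → Fin 2048) (i : Fin m) : ℕ := i.val * 2048 + (s i).val

lemma tIdx_lt {s : Fin m → Fin 2048} (i : Fin m) : tIdx s i < 2048 * m := by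
  have h1 := i.isLt
  have h2 := (s i).isLt
  unfold tIdx
  omega

lemma tIdx_inj {s s' : Fin m → Fin 2048} {i i' : Fin m} (h : tIdx s i = tIdx s' i') :
    i = i' ∧ (s i).val = (s' i').val := by
  have h1 := i.isLt
  have h2 := (s i).isLt
  have h3 := i'.isLt
  have h4 := (s' i').isLt
  unfold tIdx at h
  have : i.val = i'.val ∧ (s i).val = (s' i').val := by omega
  exact ⟨Fin.ext this.1, this.2⟩

lemma mul_add_cancel {L a b c d : ℕ} (hL : 0 < L) (hb : b < L) (hd : d < L)
    (h : a * L + b = c * L + d) : a = c ∧ b = d := by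
  have h1 : (a * L + b) % L = b % L := by rw [Nat.mul_comm]; exact Nat.mul_add_mod L a b
  have h2 : (c * L + d) % L = d % L := by rw [Nat.mul_comm]; exact Nat.mul_add_mod L c d
  have hb' : b % L = b := Nat.mod_eq_of_lt hb
  have hd' : d % L = d := Nat.mod_eq_of_lt hd
  have hbd : b = d := by rw [← hb', ← h1, h, h2, hd']
  have hml : a * L = c * L := by omega
  exact ⟨Nat.eq_of_mul_eq_mul_right hL hml, hbd⟩

lemma pos_lt (C : Ctx n l m) (s : Fin m → Fin 2048) (i : Fin m) (j : ℕ) :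
    tIdx s i * l + j % l < n := by
  have h0 : 0 < l := C.hl0
  have h1 : tIdx s i + 1 ≤ 2048 * m := tIdx_lt i
  have h2 : j % l < l := Nat.mod_lt _ h0
  have h3 : (tIdx s i + 1) * l ≤ 2048 * m * l := Nat.mul_le_mul_right _ h1
  have h4 : (tIdx s i + 1) * l = tIdx s i * l + l := by ring
  have h5 : 2048 * m * l = 2048 * l * m := by ring
  have h6 := C.hln
  omega

/-- The `j`-th vertex (cyclically) of the `i`-th block. -/
def vtx (C : Ctx n l m) (σ : Equiv.Perm (Fin n)) (s : Fin m → Fin 2048) (i : Fin m) (j : ℕ) :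
    Fin n :=
  σ.symm ⟨tIdx s i * l + j % l, pos_lt C s i j⟩

lemma vtx_val (C : Ctx n l m) (σ : Equiv.Perm (Fin n)) (s : Fin m → Fin 2048) (i : Fin m)
    (j : ℕ) : (σ (vtx C σ s i j)).val = tIdx s i * l + j % l := by
  simp [vtx]

lemma vtx_congr (C : Ctx n l m) (σ : Equiv.Perm (Fin n)) (s : Fin m → Fin 2048) (i : Fin m)
    {j j' : ℕ} (h : j % l = j' % l) : vtx C σ s i j = vtx C σ s i j' := by
  simp only [vtx, h]

lemma vtx_inj2 {C : Ctx n l m} {σ : Equiv.Perm (Fin n)} {s s' : Fin m → Fin 2048} {i i' : Fin m}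
    {j j' : ℕ} (h : vtx C σ s i j = vtx C σ s' i' j') : tIdx s i = tIdx s' i' ∧ j % l = j' % l := by
  have hval : tIdx s i * l + j % l = tIdx s' i' * l + j' % l := by
    have h2 := congrArg (fun x => (σ x).val) h
    simpa only [vtx, Equiv.apply_symm_apply] using h2
  have h0 : 0 < l := C.hl0
  exact mul_add_cancel h0 (Nat.mod_lt _ h0) (Nat.mod_lt _ h0) hval

lemma vtx_inj {C : Ctx n l m} {σ : Equiv.Perm (Fin n)} {s : Fin m → Fin 2048} {i i' : Fin m}
    {j j' : ℕ} (h : vtx C σ s i j = vtx C σ s i' j') : i = i' ∧ j % l = j' % l := by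
  obtain ⟨hT, hj⟩ := vtx_inj2 h
  exact ⟨(tIdx_inj hT).1, hj⟩

def Bset (C : Ctx n l m) (σ : Equiv.Perm (Fin n)) (s : Fin m → Fin 2048) (i : Fin m) :
    Finset (Fin n) := (Finset.range l).image (vtx C σ s i)

lemma vtx_mem_Bset (C : Ctx n l m) (σ : Equiv.Perm (Fin n)) (s : Fin m → Fin 2048) (i : Fin m)
    (j : ℕ) : vtx C σ s i j ∈ Bset C σ s i := by
  apply Finset.mem_image.mpr
  refine ⟨j % l, Finset.mem_range.mpr (Nat.mod_lt _ C.hl0), ?_⟩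
  exact vtx_congr C σ s i (Nat.mod_eq_of_lt (Nat.mod_lt _ C.hl0))

lemma mem_Bset_iff {C : Ctx n l m} {σ : Equiv.Perm (Fin n)} {s : Fin m → Fin 2048} {i : Fin m}
    {x : Fin n} : x ∈ Bset C σ s i ↔ ∃ j, j < l ∧ vtx C σ s i j = x := by
  constructor
  · intro hx
    obtain ⟨j, hj, he⟩ := Finset.mem_image.mp hx
    exact ⟨j, Finset.mem_range.mp hj, he⟩
  · rintro ⟨j, hj, he⟩
    rw [← he]
    exact vtx_mem_Bset C σ s i j

def sameB (C : Ctx n l m) (σ : Equiv.Perm (Fin n)) (s : Fin m → Fin 2048) (x y : Fin n) : Prop :=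
  ∃ i, x ∈ Bset C σ s i ∧ y ∈ Bset C σ s i

def cycArcs (C : Ctx n l m) (σ : Equiv.Perm (Fin n)) (s : Fin m → Fin 2048) : ArcSet n :=
  Finset.univ.biUnion fun i : Fin m =>
    (Finset.range l).image fun j => (vtx C σ s i j, vtx C σ s i (j + 1))

lemma cycArc_mem (C : Ctx n l m) (σ : Equiv.Perm (Fin n)) (s : Fin m → Fin 2048) (i : Fin m)
    (j : ℕ) : (vtx C σ s i j, vtx C σ s i (j + 1)) ∈ cycArcs C σ s := by
  apply Finset.mem_biUnion.mpr
  refine ⟨i, Finset.mem_univ i, Finset.mem_image.mpr ⟨j % l, Finset.mem_range.mpr (Nat.mod_lt _ C.hl0), ?_⟩⟩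
  have h1 : (j % l) % l = j % l := Nat.mod_eq_of_lt (Nat.mod_lt _ C.hl0)
  have h2 : (j % l + 1) % l = (j + 1) % l := Nat.mod_add_mod j l 1
  rw [vtx_congr C σ s i h1, vtx_congr C σ s i h2]

lemma mem_cycArcs {C : Ctx n l m} {σ : Equiv.Perm (Fin n)} {s : Fin m → Fin 2048}
    {e : Fin n × Fin n} :
    e ∈ cycArcs C σ s ↔ ∃ i j, j < l ∧ e = (vtx C σ s i j, vtx C σ s i (j + 1)) := by
  constructor
  · intro he
    obtain ⟨i, _, hi⟩ := Finset.mem_biUnion.mp he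
    obtain ⟨j, hj, he'⟩ := Finset.mem_image.mp hi
    exact ⟨i, j, Finset.mem_range.mp hj, he'.symm⟩
  · rintro ⟨i, j, hj, rfl⟩
    exact cycArc_mem C σ s i j

/-- Adding the block cycles to `G`. -/
noncomputable def addC (C : Ctx n l m) (σ : Equiv.Perm (Fin n)) (s : Fin m → Fin 2048) (G : ArcSet n) :
    ArcSet n :=
  (G.filter fun e => ¬ sameB C σ s e.1 e.2) ∪ cycArcs C σ s

lemma mem_addC {C : Ctx n l m} {σ : Equiv.Perm (Fin n)} {s : Fin m → Fin 2048} {G : ArcSet n}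
    {e : Fin n × Fin n} :
    e ∈ addC C σ s G ↔ (e ∈ G ∧ ¬ sameB C σ s e.1 e.2) ∨ e ∈ cycArcs C σ s := by
  simp [addC, Finset.mem_union, Finset.mem_filter]

/-- `σ` is a forward (topological) ordering for `G`. -/
def Fwd {n : ℕ} (G : ArcSet n) (σ : Equiv.Perm (Fin n)) : Prop :=
  ∀ e ∈ G, (σ e.1).val < (σ e.2).val

lemma arc_cases {C : Ctx n l m} {σ : Equiv.Perm (Fin n)} {s : Fin m → Fin 2048} {G : ArcSet n}
    (hG : Fwd G σ) {e : Fin n × Fin n} (he : e ∈ addC C σ s G) :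
    (σ e.1).val < (σ e.2).val ∨ ∃ i, e = (vtx C σ s i (l - 1), vtx C σ s i 0) := by
  rcases mem_addC.mp he with ⟨heG, _⟩ | hcyc
  · exact Or.inl (hG e heG)
  · obtain ⟨i, j, hj, rfl⟩ := mem_cycArcs.mp hcyc
    rcases Nat.lt_or_ge (j + 1) l with h1 | h1
    · left
      rw [vtx_val, vtx_val, Nat.mod_eq_of_lt hj, Nat.mod_eq_of_lt h1]
      omega
    · right
      refine ⟨i, ?_⟩
      have hjl : j = l - 1 := by omega
      have hl0 := C.hl0
      have h2 : (j + 1) % l = 0 % l := by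
        have : j + 1 = l := by omega
        rw [this, Nat.mod_self, Nat.zero_mod]
      rw [Prod.mk.injEq]
      exact ⟨by rw [hjl], vtx_congr C σ s i h2⟩

lemma arc_back_vals {C : Ctx n l m} (σ : Equiv.Perm (Fin n)) (s : Fin m → Fin 2048) (i : Fin m) :
    (σ (vtx C σ s i (l - 1))).val = tIdx s i * l + (l - 1) ∧
      (σ (vtx C σ s i 0)).val = tIdx s i * l := by
  have hl0 := C.hl0
  constructor
  · rw [vtx_val, Nat.mod_eq_of_lt (by omega)]
  · rw [vtx_val, Nat.zero_mod, Nat.add_zero]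

/-- The key structure lemma: every bi-infinite periodic walk in `addC C σ s G`
wraps around a single block cycle. -/
lemma walk_struct (C : Ctx n l m) (σ : Equiv.Perm (Fin n)) (s : Fin m → Fin 2048) (G : ArcSet n)
    (hG : Fwd G σ) {g : ℕ → Fin n} {q : ℕ} (hq : 0 < q) (hper : ∀ a, g (a + q) = g a)
    (harc : ∀ a, (g a, g (a + 1)) ∈ addC C σ s G) :
    ∃ (i : Fin m) (a₀ : ℕ), ∀ c, g (a₀ + c) = vtx C σ s i c := by
  classical
  have hl0 : 0 < l := C.hl0
  have hperK : ∀ K a, g (a + q * K) = g a := by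
    intro K
    induction K with
    | zero => intro a; simp
    | succ K ih =>
      intro a
      have h1 : a + q * (K + 1) = (a + q * K) + q := by ring
      rw [h1, hper, ih]
  have hmodg : ∀ a, g a = g (a % q) := by
    intro a
    have h1 : a % q + q * (a / q) = a := by
      have := Nat.div_add_mod a q
      omega
    conv_lhs => rw [← h1, hperK]
  obtain ⟨a₀, _, hmin⟩ := Finset.exists_min_image (Finset.range q) (fun a => (σ (g a)).val)
    ⟨0, Finset.mem_range.mpr hq⟩
  have hminall : ∀ a, (σ (g a₀)).val ≤ (σ (g a)).val := by
    intro a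
    rw [hmodg a]
    exact hmin _ (Finset.mem_range.mpr (Nat.mod_lt a hq))
  have harc0 : (g (a₀ + q - 1), g a₀) ∈ addC C σ s G := by
    have h1 : a₀ + q - 1 + 1 = a₀ + q := by omega
    have h2 := harc (a₀ + q - 1)
    rw [h1, hper] at h2
    exact h2
  rcases arc_cases hG harc0 with hlt | ⟨i, hei⟩
  · exact absurd hlt (not_lt.mpr (hminall _))
  have hb : g (a₀ + q - 1) = vtx C σ s i (l - 1) := congrArg Prod.fst hei
  have h0 : g a₀ = vtx C σ s i 0 := congrArg Prod.snd hei
  set T := tIdx s i with hT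
  have hval0 : (σ (g a₀)).val = T * l := by
    rw [h0, vtx_val, Nat.zero_mod, Nat.add_zero]
  have hesc : ∀ b1, T * l + l ≤ (σ (g b1)).val → False := by
    intro b1 hb1
    have hinv : ∀ c, T * l + l ≤ (σ (g (b1 + c))).val := by
      intro c
      induction c with
      | zero => simpa using hb1
      | succ c ih =>
        have harc' := harc (b1 + c)
        have hrw : b1 + (c + 1) = (b1 + c) + 1 := by omega
        rcases arc_cases hG harc' with hlt | ⟨i', he'⟩
        · have hlt' : (σ (g (b1 + c))).val < (σ (g (b1 + c + 1))).val := hlt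
          rw [hrw]; omega
        · have hsrc : g (b1 + c) = vtx C σ s i' (l - 1) := congrArg Prod.fst he'
          have htgt : g (b1 + c + 1) = vtx C σ s i' 0 := congrArg Prod.snd he'
          have hv1 : (σ (g (b1 + c))).val = tIdx s i' * l + (l - 1) := by
            rw [hsrc, vtx_val, Nat.mod_eq_of_lt (by omega)]
          have hv2 : (σ (g (b1 + c + 1))).val = tIdx s i' * l := by
            rw [htgt, vtx_val, Nat.zero_mod, Nat.add_zero]
          have h5 : T * l < tIdx s i' * l := by omega
          have h6 : T < tIdx s i' := by
            by_contra h7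
            exact absurd h5 (not_lt.mpr (Nat.mul_le_mul_right _ (not_lt.mp h7)))
          have h7 : (T + 1) * l ≤ tIdx s i' * l := Nat.mul_le_mul_right _ h6
          have h8 : (T + 1) * l = T * l + l := by ring
          rw [hrw]
          omega
    have hle : b1 + 1 ≤ q * (b1 + 1) := Nat.le_mul_of_pos_left _ hq
    have hc : g (b1 + (a₀ + q * (b1 + 1) - b1)) = g a₀ := by
      have h8 : b1 + (a₀ + q * (b1 + 1) - b1) = a₀ + q * (b1 + 1) := by omega
      rw [h8, hperK]
    have h9 := hinv (a₀ + q * (b1 + 1) - b1)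
    rw [hc] at h9
    omega
  have hrange : ∀ a, T * l ≤ (σ (g a)).val ∧ (σ (g a)).val < T * l + l := by
    intro a
    constructor
    · have := hminall a; omega
    · by_contra h
      exact hesc a (by omega)
  have hform : ∀ a jv, jv < l → (σ (g a)).val = T * l + jv → g a = vtx C σ s i jv := by
    intro a jv hjv hv
    apply σ.injective
    apply Fin.ext
    rw [hv, vtx_val, Nat.mod_eq_of_lt hjv]
  have hstep : ∀ a jv, jv < l → g a = vtx C σ s i jv → g (a + 1) = vtx C σ s i (jv + 1) := by
    intro a jv hjv hga
    have harc' := harc a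
    rcases mem_addC.mp harc' with ⟨hmem, hnsb⟩ | hcyc
    · exfalso
      apply hnsb
      refine ⟨i, ?_, ?_⟩
      · rw [hga]; exact vtx_mem_Bset C σ s i jv
      · obtain ⟨hlow, hhigh⟩ := hrange (a + 1)
        have := hform (a + 1) ((σ (g (a+1))).val - T * l) (by omega) (by omega)
        rw [this]
        exact vtx_mem_Bset C σ s i _
    · obtain ⟨i', j', hj', he⟩ := mem_cycArcs.mp hcyc
      have hsrc : g a = vtx C σ s i' j' := congrArg Prod.fst he
      have htgt : g (a + 1) = vtx C σ s i' (j' + 1) := congrArg Prod.snd he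
      obtain ⟨hii, hjj⟩ := vtx_inj (hsrc.symm.trans hga)
      subst hii
      rw [htgt]
      apply vtx_congr
      calc (j' + 1) % l = (j' % l + 1) % l := (Nat.mod_add_mod j' l 1).symm
        _ = (jv % l + 1) % l := by rw [hjj]
        _ = (jv + 1) % l := Nat.mod_add_mod jv l 1
  refine ⟨i, a₀, ?_⟩
  intro c
  induction c with
  | zero => simpa using h0
  | succ c ih =>
    have h1 : g (a₀ + c) = vtx C σ s i (c % l) := by
      rw [ih]
      exact vtx_congr C σ s i ((Nat.mod_eq_of_lt (Nat.mod_lt _ hl0)).symm)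
    have h2 := hstep (a₀ + c) (c % l) (Nat.mod_lt _ hl0) h1
    have h3 : a₀ + (c + 1) = (a₀ + c) + 1 := by omega
    rw [h3, h2]
    apply vtx_congr
    exact Nat.mod_add_mod c l 1

end Construction

section Corollaries

variable {n l m : ℕ}

lemma cycle_len (C : Ctx n l m) (σ : Equiv.Perm (Fin n)) (s : Fin m → Fin 2048) (G : ArcSet n)
    (hG : Fwd G σ) {p : ℕ} (hp : 0 < p) (h : ContainsCycle p (addC C σ s G)) : p = l := by
  obtain ⟨f, hfinj, hfarc⟩ := h
  haveI : NeZero p := ⟨hp.ne'⟩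
  set g : ℕ → Fin n := fun a => f (a : ZMod p) with hg
  have hper : ∀ a, g (a + p) = g a := by
    intro a
    show f ((a + p : ℕ) : ZMod p) = f (a : ZMod p)
    rw [Nat.cast_add, ZMod.natCast_self, add_zero]
  have harc : ∀ a, (g a, g (a + 1)) ∈ addC C σ s G := by
    intro a
    have h1 := hfarc (a : ZMod p)
    show (f (a : ZMod p), f ((a + 1 : ℕ) : ZMod p)) ∈ addC C σ s G
    rw [Nat.cast_add, Nat.cast_one]
    exact h1
  obtain ⟨i, a₀, hw⟩ := walk_struct C σ s G hG hp hper harc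
  have h0 : g a₀ = vtx C σ s i 0 := by
    have := hw 0
    rwa [Nat.add_zero] at this
  -- l ∣ p
  have h1 : g (a₀ + p) = g a₀ := hper a₀
  have h2 : vtx C σ s i p = vtx C σ s i 0 := by
    rw [← hw p, h1, h0]
  have hlp : l ∣ p := by
    have h3 := (vtx_inj h2).2
    rw [Nat.zero_mod] at h3
    exact Nat.dvd_of_mod_eq_zero h3
  -- p ∣ l
  have h3 : g (a₀ + l) = g a₀ := by
    rw [hw l, h0]
    exact vtx_congr C σ s i (by rw [Nat.mod_self, Nat.zero_mod])
  have h4 : ((a₀ + l : ℕ) : ZMod p) = ((a₀ : ℕ) : ZMod p) := hfinj h3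
  have h5 : ((l : ℕ) : ZMod p) = 0 := by
    rw [Nat.cast_add] at h4
    have h6 : ((a₀ : ℕ) : ZMod p) + l = ((a₀ : ℕ) : ZMod p) + 0 := by rw [add_zero]; exact h4
    exact add_left_cancel h6
  have hpl : p ∣ l := (ZMod.natCast_eq_zero_iff l p).mp h5
  exact Nat.dvd_antisymm hpl hlp

/-- `e` lies on some (periodic) closed walk of `E`. -/
def OnCyc {n : ℕ} (E : ArcSet n) (e : Fin n × Fin n) : Prop :=
  ∃ q, ∃ g : ℕ → Fin n, 0 < q ∧ (∀ a, g (a + q) = g a) ∧ (∀ a, (g a, g (a + 1)) ∈ E) ∧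
    ∃ a, (g a, g (a + 1)) = e

lemma onCyc_iff (C : Ctx n l m) (σ : Equiv.Perm (Fin n)) (s : Fin m → Fin 2048) (G : ArcSet n)
    (hG : Fwd G σ) {e : Fin n × Fin n} :
    OnCyc (addC C σ s G) e ↔ e ∈ cycArcs C σ s := by
  constructor
  · rintro ⟨q, g, hq, hper, harc, a, hae⟩
    obtain ⟨i, a₀, hw⟩ := walk_struct C σ s G hG hq hper harc
    have hperK : ∀ K b, g (b + q * K) = g b := by
      intro K
      induction K with
      | zero => intro b; simp
      | succ K ih =>
        intro b
        have h1 : b + q * (K + 1) = (b + q * K) + q := by ring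
        rw [h1, hper, ih]
    have hle : a₀ ≤ q * a₀ := Nat.le_mul_of_pos_left _ hq
    set c := a + q * a₀ - a₀ with hc
    have h1 : g a = g (a₀ + c) := by
      have h2 : a₀ + c = a + q * a₀ := by omega
      rw [h2, hperK]
    have h2 : g (a + 1) = g (a₀ + (c + 1)) := by
      have h3 : a₀ + (c + 1) = (a + 1) + q * a₀ := by omega
      rw [h3, hperK]
    rw [← hae, h1, h2, hw c, hw (c + 1)]
    exact cycArc_mem C σ s i c
  · intro he
    obtain ⟨i, j, hj, rfl⟩ := mem_cycArcs.mp he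
    refine ⟨l, fun a => vtx C σ s i (j + a), C.hl0, ?_, ?_, 0, ?_⟩
    · intro a
      apply vtx_congr
      rw [← Nat.add_assoc]
      exact Nat.add_mod_right _ _
    · intro a
      apply mem_addC.mpr
      right
      show (vtx C σ s i (j + a), vtx C σ s i (j + (a + 1))) ∈ cycArcs C σ s
      have h1 : j + (a + 1) = (j + a) + 1 := by omega
      rw [h1]
      exact cycArc_mem C σ s i (j + a)
    · show (vtx C σ s i (j + 0), vtx C σ s i (j + (0 + 1))) = (vtx C σ s i j, vtx C σ s i (j + 1))
      norm_num

lemma backarcs (C : Ctx n l m) (σ : Equiv.Perm (Fin n)) (s : Fin m → Fin 2048) (G : ArcSet n)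
    (hG : Fwd G σ) :
    (addC C σ s G).filter (fun e => σ e.2 < σ e.1) =
      Finset.univ.image (fun i : Fin m => (vtx C σ s i (l - 1), vtx C σ s i 0)) := by
  ext e
  simp only [Finset.mem_filter, Finset.mem_image, Finset.mem_univ, true_and]
  constructor
  · rintro ⟨he, hlt⟩
    rcases arc_cases hG he with h | ⟨i, rfl⟩
    · exfalso
      rw [Fin.lt_def] at hlt
      omega
    · exact ⟨i, rfl⟩
  · rintro ⟨i, rfl⟩
    constructor
    · apply mem_addC.mpr
      right
      have h2 : (l - 1) + 1 = l := by have := C.hl0; omega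
      have h3 := cycArc_mem C σ s i (l - 1)
      rw [h2] at h3
      have h4 : vtx C σ s i l = vtx C σ s i 0 := vtx_congr C σ s i (by rw [Nat.mod_self, Nat.zero_mod])
      rwa [h4] at h3
    · obtain ⟨hv1, hv2⟩ := arc_back_vals (C := C) σ s i
      rw [Fin.lt_def]
      show (σ (vtx C σ s i 0)).val < (σ (vtx C σ s i (l - 1))).val
      rw [hv1, hv2]
      have := C.hl3
      omega

lemma backCount_addC (C : Ctx n l m) (σ : Equiv.Perm (Fin n)) (s : Fin m → Fin 2048)
    (G : ArcSet n) (hG : Fwd G σ) : backCount (addC C σ s G) σ = m := by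
  rw [backCount, backarcs C σ s G hG, Finset.card_image_of_injective _ ?_, Finset.card_univ,
    Fintype.card_fin]
  intro a b hab
  have h1 : vtx C σ s a (l - 1) = vtx C σ s b (l - 1) := congrArg Prod.fst hab
  exact (vtx_inj h1).1

lemma backCount_ge (C : Ctx n l m) (σ : Equiv.Perm (Fin n)) (s : Fin m → Fin 2048) (G : ArcSet n)
    (τ : Equiv.Perm (Fin n)) : m ≤ backCount (addC C σ s G) τ := by
  classical
  have hchoice : ∀ i : Fin m, ∃ j, j < l ∧ ∀ j' < l,
      (τ (vtx C σ s i j')).val ≤ (τ (vtx C σ s i j)).val := by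
    intro i
    obtain ⟨j, hj, hmax⟩ := Finset.exists_max_image (Finset.range l)
      (fun j => (τ (vtx C σ s i j)).val) ⟨0, Finset.mem_range.mpr C.hl0⟩
    exact ⟨j, Finset.mem_range.mp hj, fun j' hj' => hmax j' (Finset.mem_range.mpr hj')⟩
  choose jm hjl hmax using hchoice
  have hmem : ∀ i : Fin m, (vtx C σ s i (jm i), vtx C σ s i (jm i + 1)) ∈
      (addC C σ s G).filter (fun e => τ e.2 < τ e.1) := by
    intro i
    refine Finset.mem_filter.mpr ⟨mem_addC.mpr (Or.inr (cycArc_mem C σ s i (jm i))), ?_⟩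
    have h1 := hmax i ((jm i + 1) % l) (Nat.mod_lt _ C.hl0)
    have h2 : vtx C σ s i ((jm i + 1) % l) = vtx C σ s i (jm i + 1) :=
      vtx_congr C σ s i (Nat.mod_eq_of_lt (Nat.mod_lt _ C.hl0))
    rw [h2] at h1
    have hne : vtx C σ s i (jm i + 1) ≠ vtx C σ s i (jm i) := by
      intro h
      have h3 := (vtx_inj h).2
      have h4 : (jm i) % l = jm i := Nat.mod_eq_of_lt (hjl i)
      rcases Nat.lt_or_ge (jm i + 1) l with h5 | h5
      · rw [Nat.mod_eq_of_lt h5, h4] at h3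
        omega
      · have h6 : jm i + 1 = l := by have := hjl i; omega
        rw [h6, Nat.mod_self, h4] at h3
        have := C.hl3
        omega
    have h7 : (τ (vtx C σ s i (jm i + 1))).val ≠ (τ (vtx C σ s i (jm i))).val :=
      fun h => hne (τ.injective (Fin.ext h))
    show τ (vtx C σ s i (jm i), vtx C σ s i (jm i + 1)).2 < τ (vtx C σ s i (jm i), vtx C σ s i (jm i + 1)).1
    rw [Fin.lt_def]
    simp only []
    omega
  have hinj : Set.InjOn (fun i : Fin m => (vtx C σ s i (jm i), vtx C σ s i (jm i + 1)))
      (Finset.univ : Finset (Fin m)) := by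
    intro a _ b _ h
    have h1 : vtx C σ s a (jm a) = vtx C σ s b (jm b) := congrArg Prod.fst h
    exact (vtx_inj h1).1
  have h8 := Finset.card_le_card_of_injOn _ (fun i _ => hmem i) hinj
  rw [Finset.card_univ, Fintype.card_fin] at h8
  exact h8

lemma bMin_le' (E : ArcSet n) (σ : Equiv.Perm (Fin n)) : bMin E ≤ backCount E σ :=
  Finset.inf'_le _ (Finset.mem_univ σ)

lemma le_bMin' (E : ArcSet n) (c : ℕ) (h : ∀ τ, c ≤ backCount E τ) : c ≤ bMin E :=
  Finset.le_inf' _ _ (fun τ _ => h τ)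

lemma bMin_addC (C : Ctx n l m) (σ : Equiv.Perm (Fin n)) (s : Fin m → Fin 2048) (G : ArcSet n)
    (hG : Fwd G σ) : bMin (addC C σ s G) = m :=
  le_antisymm (le_trans (bMin_le' _ σ) (le_of_eq (backCount_addC C σ s G hG)))
    (le_bMin' _ _ (backCount_ge C σ s G))

lemma oriented_addC (C : Ctx n l m) (σ : Equiv.Perm (Fin n)) (s : Fin m → Fin 2048)
    (G : ArcSet n) (hGor : IsOriented G) : IsOriented (addC C σ s G) := by
  constructor
  · intro v hv
    rcases mem_addC.mp hv with ⟨hvG, _⟩ | hcyc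
    · exact hGor.1 v hvG
    · obtain ⟨i, j, hj, he⟩ := mem_cycArcs.mp hcyc
      have h1 : v = vtx C σ s i j := congrArg Prod.fst he
      have h2 : v = vtx C σ s i (j + 1) := congrArg Prod.snd he
      have h3 := (vtx_inj (h1.symm.trans h2)).2
      have h4 : l ∣ 1 := by
        have h4' := (Nat.modEq_iff_dvd' (by omega : j ≤ j + 1)).mp h3
        simpa using h4' 
      have h5 := Nat.le_of_dvd Nat.one_pos h4
      have := C.hl3
      omega
  · intro u v huv hvu
    rcases mem_addC.mp huv with ⟨h1G, h1n⟩ | h1c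
    · rcases mem_addC.mp hvu with ⟨h2G, h2n⟩ | h2c
      · exact hGor.2 u v h1G h2G
      · obtain ⟨i, j, hj, he⟩ := mem_cycArcs.mp h2c
        have hv' : v = vtx C σ s i j := congrArg Prod.fst he
        have hu' : u = vtx C σ s i (j + 1) := congrArg Prod.snd he
        exact h1n ⟨i, by rw [hu']; exact vtx_mem_Bset C σ s i _,
          by rw [hv']; exact vtx_mem_Bset C σ s i _⟩
    · rcases mem_addC.mp hvu with ⟨h2G, h2n⟩ | h2c
      · obtain ⟨i, j, hj, he⟩ := mem_cycArcs.mp h1c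
        have hu' : u = vtx C σ s i j := congrArg Prod.fst he
        have hv' : v = vtx C σ s i (j + 1) := congrArg Prod.snd he
        exact h2n ⟨i, by rw [hv']; exact vtx_mem_Bset C σ s i _,
          by rw [hu']; exact vtx_mem_Bset C σ s i _⟩
      · obtain ⟨i, j, hj, he⟩ := mem_cycArcs.mp h1c
        obtain ⟨i', j', hj', he'⟩ := mem_cycArcs.mp h2c
        have hu1 : u = vtx C σ s i j := congrArg Prod.fst he
        have hv1 : v = vtx C σ s i (j + 1) := congrArg Prod.snd he
        have hv2 : v = vtx C σ s i' j' := congrArg Prod.fst he'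
        have hu2 : u = vtx C σ s i' (j' + 1) := congrArg Prod.snd he'
        obtain ⟨hii1, hjj1⟩ := vtx_inj (hv1.symm.trans hv2)
        obtain ⟨hii2, hjj2⟩ := vtx_inj (hu2.symm.trans hu1)
        subst hii1
        have hkey : (j + 2) % l = j % l := by
          calc (j + 2) % l = ((j + 1) + 1) % l := by ring_nf
            _ = ((j + 1) % l + 1) % l := (Nat.mod_add_mod (j+1) l 1).symm
            _ = (j' % l + 1) % l := by rw [hjj1]
            _ = (j' + 1) % l := Nat.mod_add_mod j' l 1
            _ = j % l := hjj2
        have h4 : l ∣ 2 := by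
          have h4' := (Nat.modEq_iff_dvd' (by omega : j ≤ j + 2)).mp hkey.symm
          simpa using h4' 
        have h5 := Nat.le_of_dvd (by omega) h4
        have := C.hl3
        omega

lemma ckfree_addC (C : Ctx n l m) (σ : Equiv.Perm (Fin n)) (s : Fin m → Fin 2048) (G : ArcSet n)
    (hG : Fwd G σ) {k : ℕ} (hk : 0 < k) (hlk : l ≠ k) : CkFree k (addC C σ s G) := by
  intro hcon
  exact hlk (cycle_len C σ s G hG hk hcon).symm

/-- A fixed topological order for each arc set. -/
noncomputable def topo {n : ℕ} (G : ArcSet n) : Equiv.Perm (Fin n) :=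
  if h : ∃ σ, backCount G σ = 0 then h.choose else 1

lemma topo_fwd {n : ℕ} {G : ArcSet n} (hA : IsAcyclic G) : Fwd G (topo G) := by
  have hex := exists_topo_order hA
  intro e he
  have hspec : backCount G (topo G) = 0 := by
    rw [topo, dif_pos hex]
    exact hex.choose_spec
  rw [backCount, Finset.card_eq_zero, Finset.filter_eq_empty_iff] at hspec
  have h2 := hspec he
  have hne : e.1 ≠ e.2 := by
    intro hne'
    apply hA 1 Nat.one_pos
    haveI : Subsingleton (ZMod 1) := by infer_instance
    refine ⟨fun _ => e.1, fun a b _ => Subsingleton.elim a b, fun z => ?_⟩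
    have h3 : (e.1, e.2) ∈ G := he
    rw [← hne'] at h3
    exact h3
  have h3 : (topo G) e.1 ≠ (topo G) e.2 := fun h => hne ((topo G).injective h)
  have h4 : ¬ ((topo G) e.2).val < ((topo G) e.1).val := by
    rw [← Fin.lt_def]
    exact h2
  have h5 : ((topo G) e.1).val ≠ ((topo G) e.2).val := fun h => h3 (Fin.ext h)
  omega

end Corollaries

section Fiber

variable {n l m : ℕ}

lemma mod_shift {l : ℕ} (hl0 : 0 < l) (j c : ℕ) : (j + (c + l - j % l)) % l = c % l := by
  have hr : j % l < l := Nat.mod_lt _ hl0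
  have hd := Nat.div_add_mod j l
  have h2 : j + (c + l - j % l) = c + l * (j / l + 1) := by
    have h3 : l * (j / l + 1) = l * (j / l) + l := by ring
    omega
  rw [h2, Nat.add_mul_mod_self_left]

lemma align' (C : Ctx n l m) {σ1 σ2 : Equiv.Perm (Fin n)} {s1 s2 : Fin m → Fin 2048}
    (hcyc : cycArcs C σ1 s1 = cycArcs C σ2 s2) {i1 i2 : Fin m} {j1 j2 : ℕ}
    (h0 : vtx C σ1 s1 i1 j1 = vtx C σ2 s2 i2 j2) :
    ∀ d, vtx C σ1 s1 i1 (j1 + d) = vtx C σ2 s2 i2 (j2 + d) := by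
  intro d
  induction d with
  | zero => simpa using h0
  | succ d ih =>
    have h1 : (vtx C σ1 s1 i1 (j1 + d), vtx C σ1 s1 i1 (j1 + d + 1)) ∈ cycArcs C σ2 s2 := by
      rw [← hcyc]
      exact cycArc_mem C σ1 s1 i1 (j1 + d)
    obtain ⟨i', j', hj', he⟩ := mem_cycArcs.mp h1
    have hsrc : vtx C σ1 s1 i1 (j1 + d) = vtx C σ2 s2 i' j' := congrArg Prod.fst he
    have htgt : vtx C σ1 s1 i1 (j1 + d + 1) = vtx C σ2 s2 i' (j' + 1) := congrArg Prod.snd he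
    obtain ⟨hii, hjj⟩ := vtx_inj (hsrc.symm.trans ih)
    subst hii
    have h2 : j1 + (d + 1) = (j1 + d) + 1 := by omega
    rw [h2, htgt]
    apply vtx_congr
    calc (j' + 1) % l = (j' % l + 1) % l := (Nat.mod_add_mod _ _ _).symm
      _ = ((j2 + d) % l + 1) % l := by rw [hjj]
      _ = (j2 + d + 1) % l := Nat.mod_add_mod _ _ _
      _ = (j2 + (d + 1)) % l := by rw [Nat.add_assoc]

lemma align (C : Ctx n l m) {σ1 σ2 : Equiv.Perm (Fin n)} {s1 s2 : Fin m → Fin 2048}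
    (hcyc : cycArcs C σ1 s1 = cycArcs C σ2 s2) {i1 i2 : Fin m} {j1 j2 : ℕ}
    (h0 : vtx C σ1 s1 i1 j1 = vtx C σ2 s2 i2 j2) (hj : j1 % l = j2 % l) :
    ∀ c, vtx C σ1 s1 i1 c = vtx C σ2 s2 i2 c := by
  intro c
  have hd := align' C hcyc h0 (c + l - j1 % l)
  have hm1 : (j1 + (c + l - j1 % l)) % l = c % l := mod_shift C.hl0 j1 c
  have hm2 : (j2 + (c + l - j1 % l)) % l = c % l := by
    rw [hj]
    exact mod_shift C.hl0 j2 c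
  calc vtx C σ1 s1 i1 c = vtx C σ1 s1 i1 (j1 + (c + l - j1 % l)) := vtx_congr C σ1 s1 i1 hm1.symm
    _ = vtx C σ2 s2 i2 (j2 + (c + l - j1 % l)) := hd
    _ = vtx C σ2 s2 i2 c := vtx_congr C σ2 s2 i2 hm2

lemma match_ex (C : Ctx n l m) {σ1 σ2 : Equiv.Perm (Fin n)} {s1 s2 : Fin m → Fin 2048}
    (hcyc : cycArcs C σ1 s1 = cycArcs C σ2 s2) (i1 : Fin m) :
    ∃ i2 j2, ∀ d, vtx C σ1 s1 i1 d = vtx C σ2 s2 i2 (j2 + d) := by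
  have h1 : (vtx C σ1 s1 i1 0, vtx C σ1 s1 i1 (0 + 1)) ∈ cycArcs C σ2 s2 := by
    rw [← hcyc]
    exact cycArc_mem C σ1 s1 i1 0
  obtain ⟨i2, j2, hj2, he⟩ := mem_cycArcs.mp h1
  have hsrc : vtx C σ1 s1 i1 0 = vtx C σ2 s2 i2 j2 := congrArg Prod.fst he
  refine ⟨i2, j2, fun d => ?_⟩
  have h2 := align' C hcyc hsrc d
  rwa [Nat.zero_add] at h2

lemma Bset_eq_of_corr (C : Ctx n l m) {σ1 σ2 : Equiv.Perm (Fin n)} {s1 s2 : Fin m → Fin 2048}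
    {i1 i2 : Fin m} {j2 : ℕ} (hcorr : ∀ d, vtx C σ1 s1 i1 d = vtx C σ2 s2 i2 (j2 + d)) :
    Bset C σ1 s1 i1 = Bset C σ2 s2 i2 := by
  ext x
  rw [mem_Bset_iff, mem_Bset_iff]
  constructor
  · rintro ⟨j, hj, rfl⟩
    refine ⟨(j2 + j) % l, Nat.mod_lt _ C.hl0, ?_⟩
    rw [vtx_congr C σ2 s2 i2 (Nat.mod_eq_of_lt (Nat.mod_lt _ C.hl0) : (j2 + j) % l % l = (j2 + j) % l)]
    exact (hcorr j).symm
  · rintro ⟨j, hj, rfl⟩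
    refine ⟨(j + l - j2 % l) % l, Nat.mod_lt _ C.hl0, ?_⟩
    have h1 := hcorr (j + l - j2 % l)
    have h2 : (j2 + (j + l - j2 % l)) % l = j % l := mod_shift C.hl0 j2 j
    calc vtx C σ1 s1 i1 ((j + l - j2 % l) % l)
        = vtx C σ1 s1 i1 (j + l - j2 % l) :=
          vtx_congr C σ1 s1 i1 (Nat.mod_eq_of_lt (Nat.mod_lt _ C.hl0))
      _ = vtx C σ2 s2 i2 (j2 + (j + l - j2 % l)) := h1
      _ = vtx C σ2 s2 i2 j := vtx_congr C σ2 s2 i2 h2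

lemma sameB_iff (C : Ctx n l m) {σ1 σ2 : Equiv.Perm (Fin n)} {s1 s2 : Fin m → Fin 2048}
    (hcyc : cycArcs C σ1 s1 = cycArcs C σ2 s2) (x y : Fin n) :
    sameB C σ1 s1 x y ↔ sameB C σ2 s2 x y := by
  constructor
  · rintro ⟨i, hx, hy⟩
    obtain ⟨i2, j2, hcorr⟩ := match_ex C hcyc i
    have hB := Bset_eq_of_corr C hcorr
    exact ⟨i2, hB ▸ hx, hB ▸ hy⟩
  · rintro ⟨i, hx, hy⟩
    obtain ⟨i1, j1, hcorr⟩ := match_ex C hcyc.symm i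
    have hB := Bset_eq_of_corr C hcorr
    exact ⟨i1, hB ▸ hx, hB ▸ hy⟩

/-- Membership in a `C_k`-free `F0`-graph plus a choice of slots is mapped to an
oriented graph with `m` added cycles. -/
noncomputable def Phi (C : Ctx n l m) (p : ArcSet n × (Fin m → Fin 2048)) : ArcSet n :=
  addC C (topo p.1) p.2 p.1

lemma Phi_mem_Fm (C : Ctx n l m) {k : ℕ} (hk : 0 < k) (hlk : l ≠ k)
    {p : ArcSet n × (Fin m → Fin 2048)} (hp : p.1 ∈ F0 n k) : Phi C p ∈ Fm n k m := by
  obtain ⟨hor, hcf, hac⟩ := (Finset.mem_filter.mp hp).2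
  have hfwd := topo_fwd hac
  exact Finset.mem_filter.mpr ⟨Finset.mem_univ _, oriented_addC C _ _ _ hor,
    ckfree_addC C _ _ _ hfwd hk hlk, bMin_addC C _ _ _ hfwd⟩

def pIdx (p q : ℕ) : Fin 6 := ⟨(q * (q - 1) / 2 + p) % 6, Nat.mod_lt _ (by norm_num)⟩

lemma pIdx_inj {p q p' q' : ℕ} (h1 : p < q) (h2 : q < 4) (h3 : p' < q') (h4 : q' < 4)
    (h : pIdx p q = pIdx p' q') : p = p' ∧ q = q' := by
  have hv := congrArg Fin.val h
  simp only [pIdx] at hv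
  interval_cases q <;> interval_cases p <;> interval_cases q' <;> interval_cases p' <;>
    simp_all

/-- The vertex at offset `t` in the block (position interval) containing `x`. -/
noncomputable def blkV (C : Ctx n l m) (p : ArcSet n × (Fin m → Fin 2048)) (x : Fin n) (t : ℕ) :
    Fin n :=
  (topo p.1).symm ⟨((topo p.1 x).val - (topo p.1 x).val % l + t) % n, Nat.mod_lt _ x.pos⟩

lemma blkV_eq (C : Ctx n l m) (p : ArcSet n × (Fin m → Fin 2048)) {x : Fin n} {i' : Fin m}
    {j' : ℕ} (hj' : j' < l) (h : vtx C (topo p.1) p.2 i' j' = x) (t : ℕ) (ht : t < l) :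
    blkV C p x t = vtx C (topo p.1) p.2 i' t := by
  have hv : (topo p.1 x).val = tIdx p.2 i' * l + j' := by
    rw [← h, vtx_val, Nat.mod_eq_of_lt hj']
  have hm : (topo p.1 x).val % l = j' := by
    rw [hv, Nat.mul_comm]
    exact (Nat.mul_add_mod l (tIdx p.2 i') j').trans (Nat.mod_eq_of_lt hj')
  have hsub : (topo p.1 x).val - (topo p.1 x).val % l = tIdx p.2 i' * l := by omega
  have hlt : tIdx p.2 i' * l + t < n := by
    have h2 := pos_lt C p.2 i' t
    rwa [Nat.mod_eq_of_lt ht] at h2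
  unfold blkV vtx
  apply congrArg (topo p.1).symm
  apply Fin.ext
  show ((topo p.1 x).val - (topo p.1 x).val % l + t) % n = tIdx p.2 i' * l + t % l
  rw [hsub, Nat.mod_eq_of_lt hlt, Nat.mod_eq_of_lt ht]

lemma ite_eq_true_iff {c : Prop} [inst : Decidable c] : (if c then true else false) = true ↔ c := by
  split
  · next h => exact iff_of_true rfl h
  · next h => exact iff_of_false (by simp) h

/-- The code of a pair `(G, s)` relative to a reference anchor `A`. -/
noncomputable def enc (C : Ctx n l m) (A : Fin m → Fin n)
    (p : ArcSet n × (Fin m → Fin 2048)) : Fin m → Fin l × (Fin 6 → Bool) := fun i =>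
  (⟨(topo p.1 (A i)).val % l, Nat.mod_lt _ C.hl0⟩,
   fun d => if ∃ pp qq : ℕ, pp < qq ∧ qq < l ∧ pIdx pp qq = d ∧
       (blkV C p (A i) pp, blkV C p (A i) qq) ∈ p.1 then true else false)

lemma enc_fst_spec (C : Ctx n l m) (A : Fin m → Fin n) (p : ArcSet n × (Fin m → Fin 2048))
    (i : Fin m) {i' : Fin m} {j' : ℕ} (hj' : j' < l)
    (h : vtx C (topo p.1) p.2 i' j' = A i) : ((enc C A p i).1 : ℕ) = j' := by
  show (topo p.1 (A i)).val % l = j'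
  have hv : (topo p.1 (A i)).val = tIdx p.2 i' * l + j' := by
    rw [← h, vtx_val, Nat.mod_eq_of_lt hj']
  rw [hv, Nat.mul_comm]
  exact (Nat.mul_add_mod l (tIdx p.2 i') j').trans (Nat.mod_eq_of_lt hj')

lemma enc_bit_spec (C : Ctx n l m) (A : Fin m → Fin n) (p : ArcSet n × (Fin m → Fin 2048))
    (i : Fin m) {i' : Fin m} {j' : ℕ} (hj' : j' < l)
    (h : vtx C (topo p.1) p.2 i' j' = A i) (d : Fin 6) :
    ((enc C A p i).2 d = true) ↔ ∃ pp qq : ℕ, pp < qq ∧ qq < l ∧ pIdx pp qq = d ∧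
      (vtx C (topo p.1) p.2 i' pp, vtx C (topo p.1) p.2 i' qq) ∈ p.1 := by
  show (if _ then true else false) = true ↔ _
  rw [ite_eq_true_iff]
  constructor
  · rintro ⟨pp, qq, h1, h2, h3, h4⟩
    refine ⟨pp, qq, h1, h2, h3, ?_⟩
    rwa [blkV_eq C p hj' h pp (lt_trans h1 h2), blkV_eq C p hj' h qq h2] at h4
  · rintro ⟨pp, qq, h1, h2, h3, h4⟩
    refine ⟨pp, qq, h1, h2, h3, ?_⟩
    rwa [blkV_eq C p hj' h pp (lt_trans h1 h2), blkV_eq C p hj' h qq h2]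

lemma mem_F0_iff {n k : ℕ} {G : ArcSet n} :
    G ∈ F0 n k ↔ IsOriented G ∧ CkFree k G ∧ IsAcyclic G := by
  rw [F0, Finset.mem_filter]
  simp

lemma fiber_card_le (C : Ctx n l m) {k : ℕ} (H : ArcSet n) :
    (((F0 n k) ×ˢ (Finset.univ : Finset (Fin m → Fin 2048))).filter
        fun p => Phi C p = H).card ≤ (l * 2 ^ 6) ^ m := by
  classical
  set fib := ((F0 n k) ×ˢ (Finset.univ : Finset (Fin m → Fin 2048))).filter
    (fun p => Phi C p = H) with hfibdef
  rcases fib.eq_empty_or_nonempty with hemp | hne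
  · rw [hemp, Finset.card_empty]
    exact Nat.zero_le _
  obtain ⟨p₀, hp₀⟩ := hne
  have hfacts : ∀ p ∈ fib, IsAcyclic p.1 ∧ Phi C p = H := by
    intro p hp
    have h1 := Finset.mem_filter.mp hp
    have h2 := (Finset.mem_product.mp h1.1).1
    exact ⟨(mem_F0_iff.mp h2).2.2, h1.2⟩
  have hfwd : ∀ p ∈ fib, Fwd p.1 (topo p.1) := fun p hp => topo_fwd (hfacts p hp).1
  have hcyc : ∀ p ∈ fib, ∀ p' ∈ fib, cycArcs C (topo p.1) p.2 = cycArcs C (topo p'.1) p'.2 := by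
    intro p hp p' hp'
    ext e
    have h1 := onCyc_iff C (topo p.1) p.2 p.1 (hfwd p hp) (e := e)
    have h2 := onCyc_iff C (topo p'.1) p'.2 p'.1 (hfwd p' hp') (e := e)
    rw [show addC C (topo p.1) p.2 p.1 = H from (hfacts p hp).2] at h1
    rw [show addC C (topo p'.1) p'.2 p'.1 = H from (hfacts p' hp').2] at h2
    exact h1.symm.trans h2
  set A : Fin m → Fin n := fun i => vtx C (topo p₀.1) p₀.2 i 0 with hA
  have hA0 : ∀ i, vtx C (topo p₀.1) p₀.2 i 0 = A i := fun i => rfl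
  have hanch : ∀ p ∈ fib, ∀ i : Fin m,
      ∃ c : Fin m × Fin l, vtx C (topo p.1) p.2 c.1 c.2.val = A i := by
    intro p hp i
    have h1 : (vtx C (topo p₀.1) p₀.2 i 0, vtx C (topo p₀.1) p₀.2 i (0 + 1))
        ∈ cycArcs C (topo p.1) p.2 := by
      rw [hcyc p hp p₀ hp₀]
      exact cycArc_mem C _ _ i 0
    obtain ⟨i', j', hj', he⟩ := mem_cycArcs.mp h1
    exact ⟨(i', ⟨j', hj'⟩), (congrArg Prod.fst he).symm⟩
  have hle2 : fib.card ≤ (Finset.univ : Finset (Fin m → Fin l × (Fin 6 → Bool))).card := by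
    apply Finset.card_le_card_of_injOn (enc C A) (fun p _ => Finset.mem_univ _)
    intro p1 hp1' p2 hp2' henc
    have hp1 : p1 ∈ fib := Finset.mem_coe.mp hp1'
    have hp2 : p2 ∈ fib := Finset.mem_coe.mp hp2'
    have hc12 := hcyc p1 hp1 p2 hp2
    obtain ⟨c1, hc1⟩ := Classical.axiom_of_choice (hanch p1 hp1)
    obtain ⟨c2, hc2⟩ := Classical.axiom_of_choice (hanch p2 hp2)
    -- first components of the codes agree, giving the alignment of anchored blocks
    have hfst : ∀ i, ((c1 i).2 : ℕ) = ((c2 i).2 : ℕ) := by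
      intro i
      have h1 : (enc C A p1 i).1 = (enc C A p2 i).1 := congrArg (fun f => (f i).1) henc
      have h2 := enc_fst_spec C A p1 i (c1 i).2.isLt (hc1 i)
      have h3 := enc_fst_spec C A p2 i (c2 i).2.isLt (hc2 i)
      rw [← h2, ← h3, h1]
    have halign : ∀ i c, vtx C (topo p1.1) p1.2 (c1 i).1 c =
        vtx C (topo p2.1) p2.2 (c2 i).1 c := by
      intro i
      apply align C hc12 ((hc1 i).trans (hc2 i).symm)
      rw [hfst i]
    -- Step 1: the arc sets agree
    have hGeq : p1.1 = p2.1 := by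
      ext e
      by_cases hs : sameB C (topo p1.1) p1.2 e.1 e.2
      · -- internal pair: use the codes
        obtain ⟨b, hx, hy⟩ := hs
        have hinjf : Function.Injective (fun i : Fin m => (c1 i).1) := by
          intro i i' hE0
          have hE : (c1 i).1 = (c1 i').1 := hE0
          have h1 : A i ∈ Bset C (topo p1.1) p1.2 ((c1 i).1) := by
            rw [← hc1 i]
            exact vtx_mem_Bset _ _ _ _ _
          have h2 : A i' ∈ Bset C (topo p1.1) p1.2 ((c1 i).1) := by
            rw [hE, ← hc1 i']
            exact vtx_mem_Bset _ _ _ _ _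
          obtain ⟨i0, j0, hcorr⟩ := match_ex C (hcyc p1 hp1 p₀ hp₀) ((c1 i).1)
          have hBeq := Bset_eq_of_corr C hcorr
          rw [hBeq] at h1 h2
          obtain ⟨j, hj, hv⟩ := mem_Bset_iff.mp h1
          obtain ⟨j', hj', hv'⟩ := mem_Bset_iff.mp h2
          rw [← hA0 i] at hv
          rw [← hA0 i'] at hv'
          have e1 : i0 = i := (vtx_inj hv).1
          have e2 : i0 = i' := (vtx_inj hv').1
          rw [← e1, ← e2]
        obtain ⟨i, hib0⟩ := Finite.injective_iff_surjective.mp hinjf b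
        have hib : (c1 i).1 = b := hib0
        rw [← hib] at hx hy
        obtain ⟨pp, hpp, hvp⟩ := mem_Bset_iff.mp hx
        obtain ⟨qq, hqq, hvq⟩ := mem_Bset_iff.mp hy
        have hvp2 : vtx C (topo p2.1) p2.2 (c2 i).1 pp = e.1 := by
          rw [← halign i pp]; exact hvp
        have hvq2 : vtx C (topo p2.1) p2.2 (c2 i).1 qq = e.2 := by
          rw [← halign i qq]; exact hvq
        have hbits : ∀ d, ((enc C A p1 i).2 d) = ((enc C A p2 i).2 d) := by
          intro d
          exact congrArg (fun f => (f i).2 d) henc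
        constructor
        · intro he1
          have hlt := hfwd p1 hp1 e he1
          have hppqq : pp < qq := by
            rw [← hvp, ← hvq, vtx_val, vtx_val, Nat.mod_eq_of_lt hpp, Nat.mod_eq_of_lt hqq] at hlt
            omega
          have hbit1 : ((enc C A p1 i).2 (pIdx pp qq)) = true := by
            rw [enc_bit_spec C A p1 i (c1 i).2.isLt (hc1 i)]
            refine ⟨pp, qq, hppqq, hqq, rfl, ?_⟩
            rw [hvp, hvq]
            simpa using he1
          have hbit2 := (hbits (pIdx pp qq)) ▸ hbit1
          rw [enc_bit_spec C A p2 i (c2 i).2.isLt (hc2 i)] at hbit2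
          obtain ⟨pp', qq', hpq', hql', hpi, hmem2⟩ := hbit2
          obtain ⟨hpe, hqe⟩ := pIdx_inj hpq' (lt_of_lt_of_le hql' C.hl4) hppqq
            (lt_of_lt_of_le hqq C.hl4) hpi
          subst hpe
          subst hqe
          rw [hvp2, hvq2] at hmem2
          simpa using hmem2
        · intro he2
          have hlt := hfwd p2 hp2 e he2
          have hppqq : pp < qq := by
            rw [← hvp2, ← hvq2, vtx_val, vtx_val, Nat.mod_eq_of_lt hpp, Nat.mod_eq_of_lt hqq] at hlt
            omega
          have hbit2 : ((enc C A p2 i).2 (pIdx pp qq)) = true := by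
            rw [enc_bit_spec C A p2 i (c2 i).2.isLt (hc2 i)]
            refine ⟨pp, qq, hppqq, hqq, rfl, ?_⟩
            rw [hvp2, hvq2]
            simpa using he2
          have hbit1 := (hbits (pIdx pp qq)).symm ▸ hbit2
          rw [enc_bit_spec C A p1 i (c1 i).2.isLt (hc1 i)] at hbit1
          obtain ⟨pp', qq', hpq', hql', hpi, hmem1⟩ := hbit1
          obtain ⟨hpe, hqe⟩ := pIdx_inj hpq' (lt_of_lt_of_le hql' C.hl4) hppqq
            (lt_of_lt_of_le hqq C.hl4) hpi
          subst hpe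
          subst hqe
          rw [hvp, hvq] at hmem1
          simpa using hmem1
      · -- external pair: both sides agree with `H`
        have hs2 : ¬ sameB C (topo p2.1) p2.2 e.1 e.2 :=
          fun h => hs ((sameB_iff C hc12 e.1 e.2).mpr h)
        have hiff1 : e ∈ p1.1 ↔ e ∈ H := by
          rw [← (hfacts p1 hp1).2]
          constructor
          · intro h
            exact mem_addC.mpr (Or.inl ⟨h, hs⟩)
          · intro h
            rcases mem_addC.mp h with ⟨h1, _⟩ | h1
            · exact h1
            · exfalso
              obtain ⟨i, j, hj, rfl⟩ := mem_cycArcs.mp h1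
              exact hs ⟨i, vtx_mem_Bset _ _ _ _ _, vtx_mem_Bset _ _ _ _ _⟩
        have hiff2 : e ∈ p2.1 ↔ e ∈ H := by
          rw [← (hfacts p2 hp2).2]
          constructor
          · intro h
            exact mem_addC.mpr (Or.inl ⟨h, hs2⟩)
          · intro h
            rcases mem_addC.mp h with ⟨h1, _⟩ | h1
            · exact h1
            · exfalso
              obtain ⟨i, j, hj, rfl⟩ := mem_cycArcs.mp h1
              exact hs2 ⟨i, vtx_mem_Bset _ _ _ _ _, vtx_mem_Bset _ _ _ _ _⟩
        rw [hiff1, hiff2]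
    -- Step 2: the slot functions agree
    have hseq : p1.2 = p2.2 := by
      funext i
      have h1 : (vtx C (topo p1.1) p1.2 i 0, vtx C (topo p1.1) p1.2 i (0 + 1))
          ∈ cycArcs C (topo p2.1) p2.2 := by
        rw [← hc12]
        exact cycArc_mem C _ _ i 0
      obtain ⟨i', j', hj', he⟩ := mem_cycArcs.mp h1
      have hsrc : vtx C (topo p1.1) p1.2 i 0 = vtx C (topo p2.1) p2.2 i' j' :=
        congrArg Prod.fst he
      rw [hGeq] at hsrc
      obtain ⟨hT, hmod⟩ := vtx_inj2 hsrc
      obtain ⟨hii, hsv⟩ := tIdx_inj hT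
      subst hii
      exact Fin.ext hsv
    exact Prod.ext hGeq hseq
  calc fib.card ≤ _ := hle2
    _ = (l * 2 ^ 6) ^ m := by
      rw [Finset.card_univ, Fintype.card_fun, Fintype.card_prod, Fintype.card_fun,
        Fintype.card_fin, Fintype.card_fin, Fintype.card_bool, Fintype.card_fin]

end Fiber

end FmPf

/-- For `k ≥ 3`, for all large `n` and all `0 ≤ m ≤ n/2¹³`,
`|F_m| ≥ 2^m |F_0|`. -/
theorem Fm_ge_two_pow_F0 (k : ℕ) (hk : 3 ≤ k) :
    ∃ N : ℕ, ∀ n ≥ N, ∀ m : ℕ, (m : ℝ) ≤ (n : ℝ) / 2 ^ 13 →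
      2 ^ m * (F0 n k).card ≤ (Fm n k m).card := by
  classical
  refine ⟨1, ?_⟩
  intro n hn m hm
  set l : ℕ := if k = 3 then 4 else 3 with hl
  have hl3 : 3 ≤ l := by rw [hl]; split <;> omega
  have hl4 : l ≤ 4 := by rw [hl]; split <;> omega
  have hlk : l ≠ k := by
    rw [hl]
    split
    · next h => omega
    · next h => exact fun hc => h hc.symm
  have hmn : 2 ^ 13 * m ≤ n := by
    have h1 : (0 : ℝ) < 2 ^ 13 := by norm_num
    rw [le_div_iff₀ h1] at hm
    have h2 : ((2 ^ 13 * m : ℕ) : ℝ) ≤ (n : ℝ) := by push_cast; linarith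
    exact_mod_cast h2
  have C : FmPf.Ctx n l m := by
    refine ⟨hl3, hl4, ?_⟩
    have h1 : 2048 * l ≤ 2 ^ 13 := by omega
    calc 2048 * l * m ≤ 2 ^ 13 * m := Nat.mul_le_mul_right m h1
      _ ≤ n := hmn
  set D := (F0 n k) ×ˢ (Finset.univ : Finset (Fin m → Fin 2048)) with hD
  have hmaps : ∀ p ∈ D, FmPf.Phi C p ∈ Fm n k m := by
    intro p hp
    exact FmPf.Phi_mem_Fm C (by omega : 0 < k) hlk (Finset.mem_product.mp hp).1
  have hcard1 : D.card = (F0 n k).card * 2048 ^ m := by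
    rw [hD, Finset.card_product, Finset.card_univ, Fintype.card_fun, Fintype.card_fin,
      Fintype.card_fin]
  have hsum : D.card = ∑ H ∈ Fm n k m, (D.filter fun p => FmPf.Phi C p = H).card :=
    Finset.card_eq_sum_card_fiberwise hmaps
  have hle : D.card ≤ (Fm n k m).card * (l * 2 ^ 6) ^ m := by
    rw [hsum]
    have h2 := Finset.sum_le_card_nsmul (Fm n k m)
      (fun H => (D.filter fun p => FmPf.Phi C p = H).card) ((l * 2 ^ 6) ^ m)
      (fun H _ => FmPf.fiber_card_le C H)
    simpa [smul_eq_mul] using h2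
  have hcode : l * 2 ^ 6 ≤ 1024 := by omega
  have h2 : (F0 n k).card * 2048 ^ m ≤ (Fm n k m).card * 1024 ^ m := by
    calc (F0 n k).card * 2048 ^ m = D.card := hcard1.symm
      _ ≤ (Fm n k m).card * (l * 2 ^ 6) ^ m := hle
      _ ≤ (Fm n k m).card * 1024 ^ m :=
          Nat.mul_le_mul_left _ (Nat.pow_le_pow_left hcode m)
  have h3 : (2048 : ℕ) ^ m = 2 ^ m * 1024 ^ m := by
    rw [← Nat.mul_pow]
  have h4 : 0 < (1024 : ℕ) ^ m := Nat.pow_pos (n := m) (by norm_num)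
  have h5 : ((F0 n k).card * 2 ^ m) * 1024 ^ m ≤ (Fm n k m).card * 1024 ^ m := by
    calc ((F0 n k).card * 2 ^ m) * 1024 ^ m = (F0 n k).card * (2 ^ m * 1024 ^ m) := by ring
      _ = (F0 n k).card * 2048 ^ m := by rw [← h3]
      _ ≤ (Fm n k m).card * 1024 ^ m := h2
  have h6 := Nat.le_of_mul_le_mul_right h5 h4
  calc 2 ^ m * (F0 n k).card = (F0 n k).card * 2 ^ m := Nat.mul_comm _ _
    _ ≤ (Fm n k m).card := h6
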